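/- arXiv:1710.09048 — 2 statements merged into one kernel-verified Lean document; each statement's English description precedes it below -/
import Mathlib

section
/- Let G be a finite 3-regular simple graph, let u be a vertex of G with neighbors u1, u2, u3, and let H be a finite connected simple graph, vertex-disjoint from G, having exactly three vertices v1, v2, v3 of degree 2 and all other vertices of degree 3 (a vertex gadget). Let J be the graph on the disjoint union of V(G)∖{u} and V(H) whose edges are those of G not incident with u, those of H, and the three new edges u1v1, u2v2, u3v3 (the replacement of u by H). Then J is 3-regular; moreover, if G is 3-connected and the cubic completion H⁺ (the graph H together with a new vertex v adjacent to v1, v2 and v3) is 3-connected, then J is 3-connected. -/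
open SimpleGraph

/-- `G` is `k`-connected: it has more than `k` vertices and deleting any set of fewer than
`k` vertices leaves a connected graph. -/
def KConnected (k : ℕ) {V : Type*} (G : SimpleGraph V) : Prop :=
  k < Nat.card V ∧ ∀ s : Set V, s.ncard < k → (G.induce sᶜ).Connected

/-- The graph `J` obtained by replacing the vertex `u` of `G` (with neighbors `u₁, u₂, u₃`)
by the vertex gadget `H` (with degree-2 vertices `v₁, v₂, v₃`): vertices are those of `G`
other than `u` together with those of `H`; edges are those of `G` not incident with `u`,
those of `H`, and the three new edges `u₁v₁`, `u₂v₂`, `u₃v₃`. -/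
def replaceVertex' {V V' : Type*} (G : SimpleGraph V) (H : SimpleGraph V')
    (u u₁ u₂ u₃ : V) (v₁ v₂ v₃ : V') : SimpleGraph ({x : V // x ≠ u} ⊕ V') :=
  SimpleGraph.fromRel (fun x y =>
    (∃ a b : {x : V // x ≠ u}, x = Sum.inl a ∧ y = Sum.inl b ∧ G.Adj a b) ∨
    (∃ a b : V', x = Sum.inr a ∧ y = Sum.inr b ∧ H.Adj a b) ∨
    (∃ a : {x : V // x ≠ u}, (a : V) = u₁ ∧ x = Sum.inl a ∧ y = Sum.inr v₁) ∨
    (∃ a : {x : V // x ≠ u}, (a : V) = u₂ ∧ x = Sum.inl a ∧ y = Sum.inr v₂) ∨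
    (∃ a : {x : V // x ≠ u}, (a : V) = u₃ ∧ x = Sum.inl a ∧ y = Sum.inr v₃))

/-- The cubic completion `H⁺` of a vertex gadget `H` with degree-2 vertices `v₁, v₂, v₃`:
`H` together with a new vertex adjacent to `v₁`, `v₂` and `v₃`. -/
def cubicCompletionVertex {V' : Type*} (H : SimpleGraph V') (v₁ v₂ v₃ : V') :
    SimpleGraph (Option V') :=
  SimpleGraph.fromRel (fun x y =>
    (∃ a b : V', x = some a ∧ y = some b ∧ H.Adj a b) ∨
    (x = none ∧ (y = some v₁ ∨ y = some v₂ ∨ y = some v₃)))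

section Aux

variable {V V' : Type*}
  (G : SimpleGraph V) (H : SimpleGraph V') (u u₁ u₂ u₃ : V) (v₁ v₂ v₃ : V')

lemma repl_adj_inl_inl (a b : {x : V // x ≠ u}) :
    (replaceVertex' G H u u₁ u₂ u₃ v₁ v₂ v₃).Adj (Sum.inl a) (Sum.inl b) ↔ G.Adj a b := by
  constructor
  · rintro ⟨hne, h | h⟩ <;> simp_all [replaceVertex'] <;>
      (try exact (by assumption : _root_.SimpleGraph.Adj _ _ _).symm) <;> aesop
  · intro h
    refine ⟨fun he => G.ne_of_adj h (by injection he with h2; rw [h2]), Or.inl ?_⟩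
    exact Or.inl ⟨a, b, rfl, rfl, h⟩

lemma repl_adj_inr_inr (a b : V') :
    (replaceVertex' G H u u₁ u₂ u₃ v₁ v₂ v₃).Adj (Sum.inr a) (Sum.inr b) ↔ H.Adj a b := by
  constructor
  · rintro ⟨hne, h | h⟩ <;> simp_all [replaceVertex'] <;>
      (try exact (by assumption : _root_.SimpleGraph.Adj _ _ _).symm) <;> aesop
  · intro h
    exact ⟨by simp [H.ne_of_adj h], Or.inl <| Or.inr <| Or.inl ⟨a, b, rfl, rfl, h⟩⟩

lemma repl_adj_inl_inr (a : {x : V // x ≠ u}) (b : V') :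
    (replaceVertex' G H u u₁ u₂ u₃ v₁ v₂ v₃).Adj (Sum.inl a) (Sum.inr b) ↔
      ((a : V) = u₁ ∧ b = v₁) ∨ ((a : V) = u₂ ∧ b = v₂) ∨ ((a : V) = u₃ ∧ b = v₃) := by
  constructor
  · rintro ⟨hne, h | h⟩ <;> simp_all [replaceVertex'] <;> aesop
  · rintro (⟨h1, h2⟩ | ⟨h1, h2⟩ | ⟨h1, h2⟩) <;> subst h2 <;>
      exact ⟨by simp, Or.inl <| by aesop⟩

lemma repl_adj_inr_inl (a : {x : V // x ≠ u}) (b : V') :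
    (replaceVertex' G H u u₁ u₂ u₃ v₁ v₂ v₃).Adj (Sum.inr b) (Sum.inl a) ↔
      ((a : V) = u₁ ∧ b = v₁) ∨ ((a : V) = u₂ ∧ b = v₂) ∨ ((a : V) = u₃ ∧ b = v₃) := by
  rw [SimpleGraph.adj_comm]; exact repl_adj_inl_inr G H u u₁ u₂ u₃ v₁ v₂ v₃ a b

lemma ccv_adj_some_some (a b : V') :
    (cubicCompletionVertex H v₁ v₂ v₃).Adj (some a) (some b) ↔ H.Adj a b := by
  constructor
  · rintro ⟨hne, h | h⟩ <;> simp_all [cubicCompletionVertex] <;>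
      (try exact (by assumption : _root_.SimpleGraph.Adj _ _ _).symm) <;> aesop
  · intro h
    exact ⟨by simp [H.ne_of_adj h], Or.inl <| Or.inl ⟨a, b, rfl, rfl, h⟩⟩

lemma ccv_adj_none (b : Option V') :
    (cubicCompletionVertex H v₁ v₂ v₃).Adj b none ↔
      (b = some v₁ ∨ b = some v₂ ∨ b = some v₃) := by
  constructor
  · rintro ⟨hne, h | h⟩ <;> simp_all [cubicCompletionVertex] <;> aesop
  · rintro (h | h | h) <;> subst h <;> exact ⟨by simp, Or.inr <| by aesop⟩

/-- In a connected graph, from any vertex `a ≠ u` one can reach, avoiding `u`, some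
neighbor `w` of `u`. (Walk-induction form.) -/
lemma lemA_aux {W : Type*} (K : SimpleGraph W) (t : Set W) (u : W) (hu : u ∈ tᶜ) :
    ∀ (a b : (tᶜ : Set W)) (_ : (K.induce tᶜ).Walk a b), (b : W) = u → (a : W) ≠ u →
    ∃ w, K.Adj w u ∧ ∃ (hwm : w ∈ (insert u t)ᶜ) (ham : (a : W) ∈ (insert u t)ᶜ),
      (K.induce (insert u t)ᶜ).Reachable ⟨a, ham⟩ ⟨w, hwm⟩ := by
  intro a b p
  induction p with
  | nil => intro hbu hau; exact absurd hbu hau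
  | @cons x c b h q ih =>
    intro hbu hau
    have hx : (x : W) ∈ (insert u t)ᶜ := by
      simp only [Set.mem_compl_iff, Set.mem_insert_iff, not_or]
      exact ⟨hau, x.2⟩
    by_cases hc : (c : W) = u
    · refine ⟨x, ?_, hx, hx, Reachable.refl _⟩
      have : K.Adj (x : W) (c : W) := h
      rwa [hc] at this
    · obtain ⟨w, hwadj, hwm, hcm, hreach⟩ := ih hbu hc
      refine ⟨w, hwadj, hwm, hx, ?_⟩
      have hadj : (K.induce (insert u t)ᶜ).Adj ⟨x, hx⟩ ⟨c, hcm⟩ := h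
      exact hadj.reachable.trans hreach

lemma lemA {W : Type*} (K : SimpleGraph W) (t : Set W) (u : W) (hu : u ∈ tᶜ)
    (hconn : (K.induce tᶜ).Connected) (a : W) (ha : a ∈ tᶜ) (hau : a ≠ u) :
    ∃ w, K.Adj w u ∧ ∃ (hwm : w ∈ (insert u t)ᶜ) (ham : a ∈ (insert u t)ᶜ),
      (K.induce (insert u t)ᶜ).Reachable ⟨a, ham⟩ ⟨w, hwm⟩ := by
  obtain ⟨p⟩ := hconn.preconnected ⟨a, ha⟩ ⟨u, hu⟩
  exact lemA_aux K t u hu ⟨a, ha⟩ ⟨u, hu⟩ p rfl hau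

/-- Homomorphism from the deleted `G`-part into the deleted replacement graph. -/
def homL (s : Set ({x : V // x ≠ u} ⊕ V')) :
    (G.induce (insert u (Subtype.val '' {a : {x : V // x ≠ u} | Sum.inl a ∈ s}))ᶜ) →g
    ((replaceVertex' G H u u₁ u₂ u₃ v₁ v₂ v₃).induce sᶜ) where
  toFun := fun x => ⟨Sum.inl ⟨x.1, fun h => x.2 (Set.mem_insert_iff.mpr (Or.inl h))⟩,
    fun hmem => x.2 (Set.mem_insert_iff.mpr (Or.inr ⟨_, hmem, rfl⟩))⟩
  map_rel' := by
    intro a b h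
    exact (repl_adj_inl_inl G H u u₁ u₂ u₃ v₁ v₂ v₃ _ _).mpr h

/-- Homomorphism from the deleted `H`-part into the deleted replacement graph. -/
def homR (s : Set ({x : V // x ≠ u} ⊕ V')) :
    (H.induce {y : V' | Sum.inr y ∈ s}ᶜ) →g
    ((replaceVertex' G H u u₁ u₂ u₃ v₁ v₂ v₃).induce sᶜ) where
  toFun := fun y => ⟨Sum.inr y.1, y.2⟩
  map_rel' := by
    intro a b h
    exact (repl_adj_inr_inr G H u u₁ u₂ u₃ v₁ v₂ v₃ _ _).mpr h

/-- Homomorphism from the deleted cubic completion (minus the new vertex) onto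
the correspondingly deleted gadget `H`. -/
def homP (sr : Set V') :
    ((cubicCompletionVertex H v₁ v₂ v₃).induce (insert none (some '' sr))ᶜ) →g
    (H.induce srᶜ) where
  toFun := fun o => ⟨o.1.get (by
      rcases o with ⟨o, ho⟩
      cases o with
      | none => exact absurd (Set.mem_insert _ _) ho
      | some y => simp),
    by
      rcases o with ⟨o, ho⟩
      cases o with
      | none => exact absurd (Set.mem_insert _ _) ho
      | some y =>
        intro hmem
        exact ho (Set.mem_insert_iff.mpr (Or.inr ⟨y, hmem, rfl⟩))⟩
  map_rel' := by
    rintro ⟨a, ha⟩ ⟨b, hb⟩ h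
    cases a with
    | none => exact absurd (Set.mem_insert _ _) ha
    | some y =>
      cases b with
      | none => exact absurd (Set.mem_insert _ _) hb
      | some z =>
        have : (cubicCompletionVertex H v₁ v₂ v₃).Adj (some y) (some z) := h
        exact (ccv_adj_some_some H v₁ v₂ v₃ y z).mp this

lemma homP_surj (sr : Set V') : Function.Surjective (homP H v₁ v₂ v₃ sr) := by
  rintro ⟨y, hy⟩
  refine ⟨⟨some y, ?_⟩, rfl⟩
  simp only [Set.mem_compl_iff, Set.mem_insert_iff, not_or]
  exact ⟨by simp, fun ⟨z, hz, he⟩ => hy (by cases he; exact hz)⟩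

lemma ncard_inl_union_inr {A B : Type*} [Finite A] [Finite B] (sa : Set A) (sb : Set B) :
    (Sum.inl '' sa ∪ Sum.inr '' sb : Set (A ⊕ B)).ncard = sa.ncard + sb.ncard := by
  rw [Set.ncard_union_eq (by simp [Set.disjoint_left]) (Set.toFinite _) (Set.toFinite _),
    Set.ncard_image_of_injective _ Sum.inl_injective,
    Set.ncard_image_of_injective _ Sum.inr_injective]

lemma ncard_split {A B : Type*} [Finite A] [Finite B] (s : Set (A ⊕ B)) :
    {x : A | Sum.inl x ∈ s}.ncard + {y : B | Sum.inr y ∈ s}.ncard = s.ncard := by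
  have hs : s = Sum.inl '' {x : A | Sum.inl x ∈ s} ∪ Sum.inr '' {y : B | Sum.inr y ∈ s} := by
    ext z
    cases z <;> simp
  conv_rhs => rw [hs]
  rw [ncard_inl_union_inr]

lemma three_good {A B : Type*} [Finite A] [Finite B] (sl : Set A) (sr : Set B)
    (a1 a2 a3 : A) (b1 b2 b3 : B) (ha12 : a1 ≠ a2) (ha13 : a1 ≠ a3) (ha23 : a2 ≠ a3)
    (hb12 : b1 ≠ b2) (hb13 : b1 ≠ b3) (hb23 : b2 ≠ b3)
    (hcard : sl.ncard + sr.ncard ≤ 2) :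
    (a1 ∉ sl ∧ b1 ∉ sr) ∨ (a2 ∉ sl ∧ b2 ∉ sr) ∨ (a3 ∉ sl ∧ b3 ∉ sr) := by
  by_contra hcon
  rw [not_or, not_or] at hcon
  obtain ⟨h1, h2, h3⟩ := hcon
  rw [not_and_or, not_not, not_not] at h1 h2 h3
  set T : Set (A ⊕ B) := Sum.inl '' sl ∪ Sum.inr '' sr with hT
  have hTcard : T.ncard ≤ 2 := by
    rw [hT, ncard_inl_union_inr]
    exact hcard
  have key : ∀ z1 z2 z3 : A ⊕ B, z1 ∈ T → z2 ∈ T → z3 ∈ T → z1 ≠ z2 → z1 ≠ z3 →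
      z2 ≠ z3 → False := by
    intro z1 z2 z3 m1 m2 m3 n12 n13 n23
    have hsub : ({z1, z2, z3} : Set (A ⊕ B)) ⊆ T := by
      intro z hz
      rcases hz with h | h | h <;> subst h <;> assumption
    have h3 : ({z1, z2, z3} : Set (A ⊕ B)).ncard = 3 :=
      Set.ncard_eq_three.mpr ⟨z1, z2, z3, n12, n13, n23, rfl⟩
    have := Set.ncard_le_ncard hsub T.toFinite
    omega
  have c1 : Sum.inl a1 ∈ T ∨ Sum.inr b1 ∈ T :=
    h1.imp (fun h => Set.mem_union_left _ ⟨a1, h, rfl⟩)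
      (fun h => Set.mem_union_right _ ⟨b1, h, rfl⟩)
  have c2 : Sum.inl a2 ∈ T ∨ Sum.inr b2 ∈ T :=
    h2.imp (fun h => Set.mem_union_left _ ⟨a2, h, rfl⟩)
      (fun h => Set.mem_union_right _ ⟨b2, h, rfl⟩)
  have c3 : Sum.inl a3 ∈ T ∨ Sum.inr b3 ∈ T :=
    h3.imp (fun h => Set.mem_union_left _ ⟨a3, h, rfl⟩)
      (fun h => Set.mem_union_right _ ⟨b3, h, rfl⟩)
  rcases c1 with e1 | e1 <;> rcases c2 with e2 | e2 <;> rcases c3 with e3 | e3 <;>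
    exact key _ _ _ e1 e2 e3 (by simp [ha12, ha13, ha23, hb12, hb13, hb23])
      (by simp [ha12, ha13, ha23, hb12, hb13, hb23])
      (by simp [ha12, ha13, ha23, hb12, hb13, hb23])

lemma card_bound {V V' : Type*} [Fintype V] [Fintype V'] (u u₁ u₂ u₃ : V) (v₁ v₂ v₃ : V')
    (h1 : u₁ ≠ u) (h2 : u₂ ≠ u) (h3 : u₃ ≠ u)
    (hu12 : u₁ ≠ u₂) (hu13 : u₁ ≠ u₃) (hu23 : u₂ ≠ u₃)
    (hv12 : v₁ ≠ v₂) (hv13 : v₁ ≠ v₃) (hv23 : v₂ ≠ v₃) :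
    3 < Nat.card ({x : V // x ≠ u} ⊕ V') := by
  have hA : 3 ≤ Nat.card {x : V // x ≠ u} := by
    have h3' : ({⟨u₁, h1⟩, ⟨u₂, h2⟩, ⟨u₃, h3⟩} : Set {x : V // x ≠ u}).ncard = 3 :=
      Set.ncard_eq_three.mpr ⟨_, _, _, by simp [Subtype.ext_iff, hu12],
        by simp [Subtype.ext_iff, hu13], by simp [Subtype.ext_iff, hu23], rfl⟩
    calc 3 = ({⟨u₁, h1⟩, ⟨u₂, h2⟩, ⟨u₃, h3⟩} : Set {x : V // x ≠ u}).ncard := h3'.symm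
    _ ≤ (Set.univ : Set {x : V // x ≠ u}).ncard :=
        Set.ncard_le_ncard (Set.subset_univ _) (Set.toFinite _)
    _ = Nat.card {x : V // x ≠ u} := Set.ncard_univ _
  have hB : 3 ≤ Nat.card V' := by
    have h3' : ({v₁, v₂, v₃} : Set V').ncard = 3 :=
      Set.ncard_eq_three.mpr ⟨_, _, _, hv12, hv13, hv23, rfl⟩
    calc 3 = ({v₁, v₂, v₃} : Set V').ncard := h3'.symm
    _ ≤ (Set.univ : Set V').ncard := Set.ncard_le_ncard (Set.subset_univ _) (Set.toFinite _)
    _ = Nat.card V' := Set.ncard_univ _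
  rw [Nat.card_sum]
  omega

end Aux

section DegAux

variable {V V' : Type*} [Fintype V] [Fintype V'] [DecidableEq V] [DecidableEq V']
  (G : SimpleGraph V) (H : SimpleGraph V') (u u₁ u₂ u₃ : V) (v₁ v₂ v₃ : V')

omit [DecidableEq V] in
lemma degree_part
    (hG3 : ∀ v : V, (G.neighborSet v).ncard = 3)
    (hu : G.neighborSet u = {u₁, u₂, u₃})
    (hu12 : u₁ ≠ u₂) (hu13 : u₁ ≠ u₃) (hu23 : u₂ ≠ u₃)
    (hv12 : v₁ ≠ v₂) (hv13 : v₁ ≠ v₃) (hv23 : v₂ ≠ v₃)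
    (hHdeg : ∀ x : V', (H.neighborSet x).ncard = if x = v₁ ∨ x = v₂ ∨ x = v₃ then 2 else 3) :
    ∀ x : {x : V // x ≠ u} ⊕ V',
      ((replaceVertex' G H u u₁ u₂ u₃ v₁ v₂ v₃).neighborSet x).ncard = 3 := by
  have hadjU : ∀ w, G.Adj u w ↔ w = u₁ ∨ w = u₂ ∨ w = u₃ := by
    intro w
    rw [← SimpleGraph.mem_neighborSet, hu]
    simp
  intro x
  cases x with
  | inl a =>
    have hset : (replaceVertex' G H u u₁ u₂ u₃ v₁ v₂ v₃).neighborSet (Sum.inl a) =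
        Sum.inl '' {b : {x : V // x ≠ u} | G.Adj ↑a ↑b} ∪
        Sum.inr '' {b : V' | ((a : V) = u₁ ∧ b = v₁) ∨ ((a : V) = u₂ ∧ b = v₂) ∨
          ((a : V) = u₃ ∧ b = v₃)} := by
      ext z
      cases z with
      | inl b =>
        simp only [mem_neighborSet, repl_adj_inl_inl, Set.mem_union, Set.mem_image]
        constructor
        · intro h; exact Or.inl ⟨b, h, rfl⟩
        · rintro (⟨b', hb', he⟩ | ⟨b', hb', he⟩)
          · cases he; exact hb'
          · exact absurd he (by simp)
      | inr b =>
        simp only [mem_neighborSet, repl_adj_inl_inr, Set.mem_union, Set.mem_image]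
        constructor
        · intro h; exact Or.inr ⟨b, h, rfl⟩
        · rintro (⟨b', hb', he⟩ | ⟨b', hb', he⟩)
          · exact absurd he (by simp)
          · cases he; exact hb'
    rw [hset, ncard_inl_union_inr]
    have himg : Subtype.val '' {b : {x : V // x ≠ u} | G.Adj ↑a ↑b} =
        G.neighborSet ↑a \ {u} := by
      ext x
      constructor
      · rintro ⟨⟨x', hx'⟩, h, rfl⟩; exact ⟨h, hx'⟩
      · rintro ⟨h1, h2⟩; exact ⟨⟨x, h2⟩, h1, rfl⟩
    have hcardA : {b : {x : V // x ≠ u} | G.Adj ↑a ↑b}.ncard =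
        (G.neighborSet ↑a \ {u}).ncard := by
      rw [← himg, Set.ncard_image_of_injective _ Subtype.val_injective]
    by_cases hadj : G.Adj ↑a u
    · have hmem : u ∈ G.neighborSet ↑a := hadj
      have h2 : (G.neighborSet ↑a \ {u}).ncard = 2 := by
        rw [Set.ncard_diff_singleton_of_mem hmem, hG3]
      have hai : (a : V) = u₁ ∨ (a : V) = u₂ ∨ (a : V) = u₃ := (hadjU _).mp hadj.symm
      have hcross : {b : V' | ((a : V) = u₁ ∧ b = v₁) ∨ ((a : V) = u₂ ∧ b = v₂) ∨
          ((a : V) = u₃ ∧ b = v₃)}.ncard = 1 := by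
        rcases hai with h | h | h
        · have : {b : V' | ((a : V) = u₁ ∧ b = v₁) ∨ ((a : V) = u₂ ∧ b = v₂) ∨
              ((a : V) = u₃ ∧ b = v₃)} = {v₁} := by
            ext b; simp [h, hu12, hu13, hu23, Ne.symm hu12, Ne.symm hu13, Ne.symm hu23]
          rw [this, Set.ncard_singleton]
        · have : {b : V' | ((a : V) = u₁ ∧ b = v₁) ∨ ((a : V) = u₂ ∧ b = v₂) ∨
              ((a : V) = u₃ ∧ b = v₃)} = {v₂} := by
            ext b; simp [h, hu12, hu13, hu23, Ne.symm hu12, Ne.symm hu13, Ne.symm hu23]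
          rw [this, Set.ncard_singleton]
        · have : {b : V' | ((a : V) = u₁ ∧ b = v₁) ∨ ((a : V) = u₂ ∧ b = v₂) ∨
              ((a : V) = u₃ ∧ b = v₃)} = {v₃} := by
            ext b; simp [h, hu12, hu13, hu23, Ne.symm hu12, Ne.symm hu13, Ne.symm hu23]
          rw [this, Set.ncard_singleton]
      rw [hcardA, h2, hcross]
    · have hnm : u ∉ G.neighborSet ↑a := hadj
      have h3 : (G.neighborSet ↑a \ {u}).ncard = 3 := by
        rw [Set.diff_singleton_eq_self hnm, hG3]
      have hcross : {b : V' | ((a : V) = u₁ ∧ b = v₁) ∨ ((a : V) = u₂ ∧ b = v₂) ∨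
          ((a : V) = u₃ ∧ b = v₃)}.ncard = 0 := by
        have : {b : V' | ((a : V) = u₁ ∧ b = v₁) ∨ ((a : V) = u₂ ∧ b = v₂) ∨
            ((a : V) = u₃ ∧ b = v₃)} = ∅ := by
          have hna : ¬((a : V) = u₁ ∨ (a : V) = u₂ ∨ (a : V) = u₃) :=
            fun hh => hadj (((hadjU (a : V)).mpr hh).symm)
          ext b
          simp only [Set.mem_setOf_eq, Set.mem_empty_iff_false, iff_false, not_or]
          exact ⟨fun h => hna (Or.inl h.1), fun h => hna (Or.inr (Or.inl h.1)),
            fun h => hna (Or.inr (Or.inr h.1))⟩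
        rw [this, Set.ncard_empty]
      rw [hcardA, h3, hcross]
  | inr b =>
    have hset : (replaceVertex' G H u u₁ u₂ u₃ v₁ v₂ v₃).neighborSet (Sum.inr b) =
        Sum.inl '' {a : {x : V // x ≠ u} | ((a : V) = u₁ ∧ b = v₁) ∨
          ((a : V) = u₂ ∧ b = v₂) ∨ ((a : V) = u₃ ∧ b = v₃)} ∪
        Sum.inr '' (H.neighborSet b) := by
      ext z
      cases z with
      | inl a' =>
        simp only [mem_neighborSet, repl_adj_inr_inl, Set.mem_union, Set.mem_image]
        constructor
        · intro h; exact Or.inl ⟨a', h, rfl⟩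
        · rintro (⟨a'', ha'', he⟩ | ⟨a'', ha'', he⟩)
          · cases he; exact ha''
          · exact absurd he (by simp)
      | inr b' =>
        simp only [mem_neighborSet, repl_adj_inr_inr, Set.mem_union, Set.mem_image]
        constructor
        · intro h; exact Or.inr ⟨b', h, rfl⟩
        · rintro (⟨a'', ha'', he⟩ | ⟨b'', hb'', he⟩)
          · exact absurd he (by simp)
          · cases he; exact hb''
    rw [hset, ncard_inl_union_inr]
    have huine : ∀ w, w = u₁ ∨ w = u₂ ∨ w = u₃ → w ≠ u := by
      intro w hw he
      have hadj : G.Adj u w := (hadjU w).mpr hw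
      rw [he] at hadj
      exact G.loopless.irrefl u hadj
    by_cases hb1 : b = v₁
    · have hC : {a : {x : V // x ≠ u} | ((a : V) = u₁ ∧ b = v₁) ∨
          ((a : V) = u₂ ∧ b = v₂) ∨ ((a : V) = u₃ ∧ b = v₃)} =
          {⟨u₁, huine u₁ (Or.inl rfl)⟩} := by
        ext a; simp [hb1, hv12, hv13, Subtype.ext_iff]
      rw [hC, Set.ncard_singleton, hHdeg, if_pos (Or.inl hb1)]
    · by_cases hb2 : b = v₂
      · have hC : {a : {x : V // x ≠ u} | ((a : V) = u₁ ∧ b = v₁) ∨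
            ((a : V) = u₂ ∧ b = v₂) ∨ ((a : V) = u₃ ∧ b = v₃)} =
            {⟨u₂, huine u₂ (Or.inr (Or.inl rfl))⟩} := by
          ext a; simp [hb2, Ne.symm hv12, hv23, Subtype.ext_iff]
        rw [hC, Set.ncard_singleton, hHdeg, if_pos (Or.inr (Or.inl hb2))]
      · by_cases hb3 : b = v₃
        · have hC : {a : {x : V // x ≠ u} | ((a : V) = u₁ ∧ b = v₁) ∨
              ((a : V) = u₂ ∧ b = v₂) ∨ ((a : V) = u₃ ∧ b = v₃)} =
              {⟨u₃, huine u₃ (Or.inr (Or.inr rfl))⟩} := by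
            ext a; simp [hb3, Ne.symm hv13, Ne.symm hv23, Subtype.ext_iff]
          rw [hC, Set.ncard_singleton, hHdeg, if_pos (Or.inr (Or.inr hb3))]
        · have hC : {a : {x : V // x ≠ u} | ((a : V) = u₁ ∧ b = v₁) ∨
              ((a : V) = u₂ ∧ b = v₂) ∨ ((a : V) = u₃ ∧ b = v₃)} = ∅ := by
            ext a; simp [hb1, hb2, hb3]
          rw [hC, Set.ncard_empty, hHdeg, if_neg (by tauto)]

end DegAux

/-- Replacing a vertex `u` of a finite 3-regular simple graph `G` (with neighbors
`u₁, u₂, u₃`) by a vertex gadget `H` (a finite connected simple graph with exactly three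
vertices `v₁, v₂, v₃` of degree 2 and all other vertices of degree 3) produces a 3-regular
graph `J`; moreover, if `G` and the cubic completion `H⁺` are 3-connected then so is `J`. -/
theorem replaceVertex_cubic_and_three_connected {V V' : Type*} [Fintype V] [Fintype V']
    [DecidableEq V] [DecidableEq V']
    (G : SimpleGraph V) (H : SimpleGraph V') (u u₁ u₂ u₃ : V) (v₁ v₂ v₃ : V')
    (hG3 : ∀ v : V, (G.neighborSet v).ncard = 3)
    (hu : G.neighborSet u = {u₁, u₂, u₃})
    (hu12 : u₁ ≠ u₂) (hu13 : u₁ ≠ u₃) (hu23 : u₂ ≠ u₃)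
    (hHconn : H.Connected)
    (hv12 : v₁ ≠ v₂) (hv13 : v₁ ≠ v₃) (hv23 : v₂ ≠ v₃)
    (hHdeg : ∀ x : V', (H.neighborSet x).ncard = if x = v₁ ∨ x = v₂ ∨ x = v₃ then 2 else 3) :
    (∀ x : {x : V // x ≠ u} ⊕ V',
      ((replaceVertex' G H u u₁ u₂ u₃ v₁ v₂ v₃).neighborSet x).ncard = 3) ∧
    (KConnected 3 G → KConnected 3 (cubicCompletionVertex H v₁ v₂ v₃) →
      KConnected 3 (replaceVertex' G H u u₁ u₂ u₃ v₁ v₂ v₃)) := by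
  have hadjU : ∀ w, G.Adj u w ↔ w = u₁ ∨ w = u₂ ∨ w = u₃ := by
    intro w
    rw [← SimpleGraph.mem_neighborSet, hu]
    simp
  have huine : ∀ w, w = u₁ ∨ w = u₂ ∨ w = u₃ → w ≠ u := by
    intro w hw he
    have hadj : G.Adj u w := (hadjU w).mpr hw
    rw [he] at hadj
    exact G.loopless.irrefl u hadj
  have hne1 : u₁ ≠ u := huine u₁ (Or.inl rfl)
  have hne2 : u₂ ≠ u := huine u₂ (Or.inr (Or.inl rfl))
  have hne3 : u₃ ≠ u := huine u₃ (Or.inr (Or.inr rfl))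
  refine ⟨degree_part G H u u₁ u₂ u₃ v₁ v₂ v₃ hG3 hu hu12 hu13 hu23 hv12 hv13 hv23 hHdeg, ?_⟩
  intro hGc hHPc
  refine ⟨card_bound u u₁ u₂ u₃ v₁ v₂ v₃ hne1 hne2 hne3 hu12 hu13 hu23 hv12 hv13 hv23, ?_⟩
  intro s hs
  set sl : Set {x : V // x ≠ u} := {a : {x : V // x ≠ u} | Sum.inl a ∈ s} with hsl_def
  set sr : Set V' := {y : V' | Sum.inr y ∈ s} with hsr_def
  have hsplit : sl.ncard + sr.ncard ≤ 2 := by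
    have h := ncard_split s
    rw [← hsl_def, ← hsr_def] at h
    omega
  have himgmem : ∀ (a : {x : V // x ≠ u}), a ∉ sl → (a : V) ∉ Subtype.val '' sl := by
    intro a ha
    rintro ⟨a', ha', he⟩
    have : a' = a := Subtype.val_injective he
    rw [this] at ha'
    exact ha ha'
  have hconnH : sr.ncard ≤ 1 → (H.induce srᶜ).Connected := by
    intro h1
    have hcard : (insert none (some '' sr) : Set (Option V')).ncard < 3 := by
      have hi := Set.ncard_insert_le (none : Option V') (some '' sr)
      have hj := Set.ncard_image_of_injective sr (Option.some_injective V')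
      omega
    exact ((hHPc.2 _ hcard).map _ (homP_surj H v₁ v₂ v₃ sr))
  have hconnG : sl.ncard ≤ 1 →
      (G.induce (insert u (Subtype.val '' sl))ᶜ).Connected := by
    intro h1
    apply hGc.2
    have hi := Set.ncard_insert_le u (Subtype.val '' sl)
    have hj := Set.ncard_image_of_injective sl (Subtype.val_injective (p := fun x => x ≠ u))
    omega
  have good := three_good sl sr ⟨u₁, hne1⟩ ⟨u₂, hne2⟩ ⟨u₃, hne3⟩ v₁ v₂ v₃
    (fun he => hu12 (congrArg Subtype.val he)) (fun he => hu13 (congrArg Subtype.val he))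
    (fun he => hu23 (congrArg Subtype.val he)) hv12 hv13 hv23 hsplit
  have main : ∀ (w : {x : V // x ≠ u}) (y : V'),
      ((w : V) = u₁ ∧ y = v₁ ∨ (w : V) = u₂ ∧ y = v₂ ∨ (w : V) = u₃ ∧ y = v₃) →
      w ∉ sl → y ∉ sr →
      ((replaceVertex' G H u u₁ u₂ u₃ v₁ v₂ v₃).induce sᶜ).Connected := by
    intro w y hcl hwsl hysr
    have hyc : Sum.inr y ∈ sᶜ := hysr
    have hwc : Sum.inl w ∈ sᶜ := hwsl
    have hubadj : (replaceVertex' G H u u₁ u₂ u₃ v₁ v₂ v₃).Adj (Sum.inl w) (Sum.inr y) :=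
      (repl_adj_inl_inr G H u u₁ u₂ u₃ v₁ v₂ v₃ w y).mpr hcl
    have claim : ∀ z (hz : z ∈ sᶜ),
        ((replaceVertex' G H u u₁ u₂ u₃ v₁ v₂ v₃).induce sᶜ).Reachable ⟨z, hz⟩
          ⟨Sum.inr y, hyc⟩ := by
      intro z hz
      cases z with
      | inr b =>
        have hb : b ∉ sr := hz
        rcases le_or_gt sr.ncard 1 with hsr1 | hsr2
        · exact ((hconnH hsr1).preconnected ⟨b, hb⟩ ⟨y, hysr⟩).map
            (homR G H u u₁ u₂ u₃ v₁ v₂ v₃ s)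
        · -- sr.ncard = 2, hence sl = ∅
          have hsl0 : sl = ∅ := by
            have : sl.ncard = 0 := by omega
            exact (Set.ncard_eq_zero (Set.toFinite sl)).mp this
          have hnone : (none : Option V') ∈ (some '' sr)ᶜ := by simp
          have hconnP : ((cubicCompletionVertex H v₁ v₂ v₃).induce
              (some '' sr)ᶜ).Connected := by
            apply hHPc.2
            rw [Set.ncard_image_of_injective sr (Option.some_injective V')]
            omega
          have hbmem : (some b : Option V') ∈ (some '' sr)ᶜ := by
            intro hmem
            obtain ⟨c, hc, he⟩ := hmem
            injection he with h'
            rw [h'] at hc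
            exact hb hc
          obtain ⟨w', hwadj, hwm, ham, hreach⟩ := lemA (cubicCompletionVertex H v₁ v₂ v₃)
            (some '' sr) none hnone hconnP (some b) hbmem (by simp)
          have hw3 := (ccv_adj_none H v₁ v₂ v₃ w').mp hwadj
          have hex : ∃ (wS : {x : V // x ≠ u}) (yj : V'), w' = some yj ∧
              ((wS : V) = u₁ ∧ yj = v₁ ∨ (wS : V) = u₂ ∧ yj = v₂ ∨
                (wS : V) = u₃ ∧ yj = v₃) := by
            rcases hw3 with h | h | h
            exacts [⟨⟨u₁, hne1⟩, v₁, h, Or.inl ⟨rfl, rfl⟩⟩,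
              ⟨⟨u₂, hne2⟩, v₂, h, Or.inr (Or.inl ⟨rfl, rfl⟩)⟩,
              ⟨⟨u₃, hne3⟩, v₃, h, Or.inr (Or.inr ⟨rfl, rfl⟩)⟩]
          obtain ⟨wS, yj, hwj, hcl2⟩ := hex
          subst hwj
          have hyjsr : yj ∉ sr := by
            intro hmem
            exact hwm (Set.mem_insert_iff.mpr (Or.inr ⟨yj, hmem, rfl⟩))
          have r1 : ((replaceVertex' G H u u₁ u₂ u₃ v₁ v₂ v₃).induce sᶜ).Reachable
              ⟨Sum.inr b, hz⟩ ⟨Sum.inr yj, hyjsr⟩ :=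
            hreach.map ((homR G H u u₁ u₂ u₃ v₁ v₂ v₃ s).comp (homP H v₁ v₂ v₃ sr))
          have hwS_sl : wS ∉ sl := by rw [hsl0]; exact Set.notMem_empty wS
          have e1 : ((replaceVertex' G H u u₁ u₂ u₃ v₁ v₂ v₃).induce sᶜ).Adj
              ⟨Sum.inr yj, hyjsr⟩ ⟨Sum.inl wS, hwS_sl⟩ :=
            (repl_adj_inr_inl G H u u₁ u₂ u₃ v₁ v₂ v₃ wS yj).mpr hcl2
          have hconnG0 : (G.induce (insert u (Subtype.val '' sl))ᶜ).Connected :=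
            hconnG (by omega)
          have hwS_mem : (wS : V) ∈ (insert u (Subtype.val '' sl))ᶜ := by
            simp only [Set.mem_compl_iff, Set.mem_insert_iff, not_or]
            exact ⟨wS.2, himgmem wS hwS_sl⟩
          have hw_mem : (w : V) ∈ (insert u (Subtype.val '' sl))ᶜ := by
            simp only [Set.mem_compl_iff, Set.mem_insert_iff, not_or]
            exact ⟨w.2, himgmem w hwsl⟩
          have r2 : ((replaceVertex' G H u u₁ u₂ u₃ v₁ v₂ v₃).induce sᶜ).Reachable
              ⟨Sum.inl wS, hwS_sl⟩ ⟨Sum.inl w, hwc⟩ :=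
            (hconnG0.preconnected ⟨(wS : V), hwS_mem⟩ ⟨(w : V), hw_mem⟩).map
              (homL G H u u₁ u₂ u₃ v₁ v₂ v₃ s)
          have e2 : ((replaceVertex' G H u u₁ u₂ u₃ v₁ v₂ v₃).induce sᶜ).Adj
              ⟨Sum.inl w, hwc⟩ ⟨Sum.inr y, hyc⟩ := hubadj
          exact r1.trans (e1.reachable.trans (r2.trans e2.reachable))
      | inl a =>
        have ha : a ∉ sl := hz
        rcases le_or_gt sl.ncard 1 with hsl1 | hsl2
        · have hconnG0 := hconnG hsl1
          have hamem : (a : V) ∈ (insert u (Subtype.val '' sl))ᶜ := by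
            simp only [Set.mem_compl_iff, Set.mem_insert_iff, not_or]
            exact ⟨a.2, himgmem a ha⟩
          have hwmem : (w : V) ∈ (insert u (Subtype.val '' sl))ᶜ := by
            simp only [Set.mem_compl_iff, Set.mem_insert_iff, not_or]
            exact ⟨w.2, himgmem w hwsl⟩
          have r1 : ((replaceVertex' G H u u₁ u₂ u₃ v₁ v₂ v₃).induce sᶜ).Reachable
              ⟨Sum.inl a, hz⟩ ⟨Sum.inl w, hwc⟩ :=
            (hconnG0.preconnected ⟨(a : V), hamem⟩ ⟨(w : V), hwmem⟩).map
              (homL G H u u₁ u₂ u₃ v₁ v₂ v₃ s)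
          have e2 : ((replaceVertex' G H u u₁ u₂ u₃ v₁ v₂ v₃).induce sᶜ).Adj
              ⟨Sum.inl w, hwc⟩ ⟨Sum.inr y, hyc⟩ := hubadj
          exact r1.trans e2.reachable
        · -- sl.ncard = 2, hence sr = ∅
          have hsr0 : sr = ∅ := by
            have : sr.ncard = 0 := by omega
            exact (Set.ncard_eq_zero (Set.toFinite sr)).mp this
          have hcut : u ∈ (Subtype.val '' sl)ᶜ := by
            rintro ⟨a', _, he⟩
            exact a'.2 he
          have hconnsl : (G.induce (Subtype.val '' sl)ᶜ).Connected := by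
            apply hGc.2
            rw [Set.ncard_image_of_injective sl (Subtype.val_injective (p := fun x => x ≠ u))]
            omega
          obtain ⟨w', hwadj, hwm, ham, hreach⟩ := lemA G (Subtype.val '' sl) u hcut hconnsl
            (a : V) (himgmem a ha) a.2
          have hw'ne : w' ≠ u := fun he => by
            rw [he] at hwadj
            exact G.loopless.irrefl u hwadj
          have hw3 : w' = u₁ ∨ w' = u₂ ∨ w' = u₃ := (hadjU w').mp hwadj.symm
          have hex : ∃ yj : V', (((⟨w', hw'ne⟩ : {x : V // x ≠ u}) : V) = u₁ ∧ yj = v₁ ∨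
              ((⟨w', hw'ne⟩ : {x : V // x ≠ u}) : V) = u₂ ∧ yj = v₂ ∨
              ((⟨w', hw'ne⟩ : {x : V // x ≠ u}) : V) = u₃ ∧ yj = v₃) := by
            rcases hw3 with h | h | h
            exacts [⟨v₁, Or.inl ⟨h, rfl⟩⟩, ⟨v₂, Or.inr (Or.inl ⟨h, rfl⟩)⟩,
              ⟨v₃, Or.inr (Or.inr ⟨h, rfl⟩)⟩]
          obtain ⟨yj, hcl2⟩ := hex
          have hyjsr : yj ∉ sr := by rw [hsr0]; exact Set.notMem_empty yj
          have hwS_sl : (⟨w', hw'ne⟩ : {x : V // x ≠ u}) ∉ sl := by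
            intro hmem
            exact hwm (Set.mem_insert_iff.mpr (Or.inr ⟨⟨w', hw'ne⟩, hmem, rfl⟩))
          have r1 : ((replaceVertex' G H u u₁ u₂ u₃ v₁ v₂ v₃).induce sᶜ).Reachable
              ⟨Sum.inl a, hz⟩ ⟨Sum.inl ⟨w', hw'ne⟩, hwS_sl⟩ :=
            hreach.map (homL G H u u₁ u₂ u₃ v₁ v₂ v₃ s)
          have e1 : ((replaceVertex' G H u u₁ u₂ u₃ v₁ v₂ v₃).induce sᶜ).Adj
              ⟨Sum.inl ⟨w', hw'ne⟩, hwS_sl⟩ ⟨Sum.inr yj, hyjsr⟩ :=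
            (repl_adj_inl_inr G H u u₁ u₂ u₃ v₁ v₂ v₃ ⟨w', hw'ne⟩ yj).mpr hcl2
          have r2 : ((replaceVertex' G H u u₁ u₂ u₃ v₁ v₂ v₃).induce sᶜ).Reachable
              ⟨Sum.inr yj, hyjsr⟩ ⟨Sum.inr y, hyc⟩ :=
            ((hconnH (by omega)).preconnected ⟨yj, hyjsr⟩ ⟨y, hysr⟩).map
              (homR G H u u₁ u₂ u₃ v₁ v₂ v₃ s)
          exact r1.trans (e1.reachable.trans r2)
    rw [connected_iff]
    exact ⟨fun x₁ x₂ => (claim x₁.1 x₁.2).trans (claim x₂.1 x₂.2).symm, ⟨⟨Sum.inr y, hyc⟩⟩⟩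
  rcases good with ⟨h1, h2⟩ | ⟨h1, h2⟩ | ⟨h1, h2⟩
  · exact main _ _ (Or.inl ⟨rfl, rfl⟩) h1 h2
  · exact main _ _ (Or.inr (Or.inl ⟨rfl, rfl⟩)) h1 h2
  · exact main _ _ (Or.inr (Or.inr ⟨rfl, rfl⟩)) h1 h2
end

section
/- For any finite simple graph G, the relation E₃ on V(G), defined by u E₃ v if and only if there exist three pairwise edge-disjoint paths from u to v in G, is an equivalence relation (it is reflexive, symmetric, and transitive). -/
open SimpleGraph Finset

set_option linter.unusedSectionVars false

namespace TEDP

variable {V : Type*} [Fintype V] [DecidableEq V] {G : SimpleGraph V}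

/-- unit flow along a single arc `x → y`. -/
def arcFlow (x y : V) : V → V → ℤ := fun z t =>
  if z = x ∧ t = y then 1 else if z = y ∧ t = x then -1 else 0

/-- unit flow along a list of vertices. -/
def pathFlow : List V → V → V → ℤ
  | [], _, _ => 0
  | [_], _, _ => 0
  | a :: b :: l, z, t => arcFlow a b z t + pathFlow (b :: l) z t

lemma arcFlow_skew {x y : V} (hxy : x ≠ y) (z t : V) :
    arcFlow x y z t = - arcFlow x y t z := by
  unfold arcFlow
  by_cases h1 : z = x <;> by_cases h2 : t = y <;> by_cases h3 : z = y <;> by_cases h4 : t = x <;>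
    simp_all <;> omega

lemma pathFlow_skew {p : List V} (hp : p.Chain' (· ≠ ·)) (z t : V) :
    pathFlow p z t = - pathFlow p t z := by
  induction p with
  | nil => simp [pathFlow]
  | cons a l ih =>
    match l with
    | [] => simp [pathFlow]
    | b :: l' =>
      have hab : a ≠ b := (List.isChain_cons_cons.mp hp).1
      have h := ih (List.isChain_cons_cons.mp hp).2
      show arcFlow a b z t + pathFlow (b :: l') z t
          = -(arcFlow a b t z + pathFlow (b :: l') t z)
      rw [arcFlow_skew hab, h]; ring

lemma arcFlow_rowSum {x y : V} (hxy : x ≠ y) (z : V) :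
    ∑ t, arcFlow x y z t = (if z = x then 1 else 0) - (if z = y then 1 else 0) := by
  by_cases hz : z = x
  · subst hz
    have : ∀ t : V, arcFlow z y z t = if t = y then (1:ℤ) else 0 := by
      intro t; simp [arcFlow, hxy, fun h : z = y => hxy h]
    rw [Finset.sum_congr rfl fun t _ => this t]
    simp [hxy, fun h : z = y => hxy h]
  · by_cases hz2 : z = y
    · subst hz2
      have : ∀ t : V, arcFlow x z z t = if t = x then (-1:ℤ) else 0 := by
        intro t; simp [arcFlow, hz]
      rw [Finset.sum_congr rfl fun t _ => this t]
      simp [hz]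
    · have : ∀ t : V, arcFlow x y z t = 0 := by
        intro t; simp [arcFlow, hz, hz2]
      rw [Finset.sum_congr rfl fun t _ => this t]
      simp [hz, hz2]

lemma pathFlow_rowSum {p : List V} (hp : p.Chain' (· ≠ ·)) (z : V) :
    ∑ t, pathFlow p z t =
      (if p.head? = some z then 1 else 0) - (if p.getLast? = some z then 1 else 0) := by
  induction p with
  | nil => simp [pathFlow]
  | cons a l ih =>
    match l with
    | [] => simp [pathFlow]
    | b :: l' =>
      have hab : a ≠ b := (List.isChain_cons_cons.mp hp).1
      have ih' := ih (List.isChain_cons_cons.mp hp).2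
      have hpf : ∀ z t : V, pathFlow (a :: b :: l') z t
          = arcFlow a b z t + pathFlow (b :: l') z t := fun _ _ => rfl
      rw [Finset.sum_congr rfl fun t _ => hpf z t, Finset.sum_add_distrib, ih',
        arcFlow_rowSum hab]
      have h2 : (a :: b :: l').getLast? = (b :: l').getLast? := by
        rw [List.getLast?_cons_cons]
      rw [h2]
      show _ = (if some a = some z then (1:ℤ) else 0) - _
      have : (b :: l').head? = some b := rfl
      rw [this]
      by_cases h3 : z = a <;> by_cases h4 : z = b <;>
        simp [h3, h4, eq_comm] <;> ring


/-- the list of consecutive pairs. -/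
def arcs (p : List V) : List (V × V) := p.zip p.tail

lemma mem_arcs {p : List V} {z t : V} (h : (z, t) ∈ arcs p) : z ∈ p ∧ t ∈ p := by
  have := List.of_mem_zip h
  exact ⟨this.1, List.mem_of_mem_tail this.2⟩

lemma chain'_of_arcs {r : V → V → Prop} {p : List V} (hp : p.Chain' r) {z t : V}
    (h : (z, t) ∈ arcs p) : r z t := by
  induction p with
  | nil => simp [arcs] at h
  | cons a l ih =>
    match l with
    | [] => simp [arcs] at h
    | b :: l' =>
      have : arcs (a :: b :: l') = (a, b) :: arcs (b :: l') := rfl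
      rw [this, List.mem_cons] at h
      rcases h with h | h
      · cases h; exact (List.isChain_cons_cons.mp hp).1
      · exact ih (List.isChain_cons_cons.mp hp).2 h

lemma pathFlow_eq {p : List V} (hp : p.Nodup) (z t : V) :
    pathFlow p z t =
      if (z, t) ∈ arcs p then 1 else if (t, z) ∈ arcs p then -1 else 0 := by
  induction p with
  | nil => simp [pathFlow, arcs]
  | cons a l ih =>
    match l with
    | [] => simp [pathFlow, arcs]
    | b :: l' =>
      have hal : a ∉ b :: l' := (List.nodup_cons.mp hp).1
      have hnd : (b :: l').Nodup := (List.nodup_cons.mp hp).2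
      have hab : a ≠ b := fun h => hal (h ▸ List.mem_cons_self)
      have harcs : arcs (a :: b :: l') = (a, b) :: arcs (b :: l') := rfl
      have hpf : pathFlow (a :: b :: l') z t
          = arcFlow a b z t + pathFlow (b :: l') z t := rfl
      have hno : ∀ w w', (w, w') ∈ arcs (b :: l') → w ≠ a ∧ w' ≠ a := by
        intro w w' hw
        have := mem_arcs hw
        exact ⟨fun h => hal (h ▸ this.1), fun h => hal (h ▸ this.2)⟩
      rw [hpf, ih hnd, harcs]
      by_cases h1 : z = a ∧ t = b
      · obtain ⟨rfl, rfl⟩ := h1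
        have e1 : (z, t) ∉ arcs (t :: l') := fun h => (hno _ _ h).1 rfl
        have e2 : (t, z) ∉ arcs (t :: l') := fun h => (hno _ _ h).2 rfl
        simp [arcFlow, e1, e2, hab]
      · by_cases h2 : z = b ∧ t = a
        · obtain ⟨rfl, rfl⟩ := h2
          have e1 : (z, t) ∉ arcs (z :: l') := fun h => (hno _ _ h).2 rfl
          have e2 : (t, z) ∉ arcs (z :: l') := fun h => (hno _ _ h).1 rfl
          have e3 : (z, t) ≠ (t, z) := by simp [Prod.ext_iff]; intro h; exact absurd h hab.symm
          simp [arcFlow, e1, e2, hab, hab.symm, e3, Prod.ext_iff]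
        · have ha : arcFlow a b z t = 0 := by
            simp only [arcFlow, if_neg h1]
            rw [if_neg]; intro ⟨hz, ht⟩; exact h2 ⟨hz, ht⟩
          have m1 : ((z, t) ∈ (a, b) :: arcs (b :: l')) ↔ (z, t) ∈ arcs (b :: l') := by
            simp only [List.mem_cons, or_iff_right_iff_imp]
            intro h; exfalso; apply h1; exact ⟨congrArg Prod.fst h, congrArg Prod.snd h⟩
          have m2 : ((t, z) ∈ (a, b) :: arcs (b :: l')) ↔ (t, z) ∈ arcs (b :: l') := by
            simp only [List.mem_cons, or_iff_right_iff_imp]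
            intro h
            exfalso; apply h2
            exact ⟨congrArg Prod.snd h, congrArg Prod.fst h⟩
          rw [ha, zero_add]
          simp only [m1, m2]

/-- shorten a chain to a nodup chain with the same endpoints. -/
lemma exists_nodup_chain (r : V → V → Prop) :
    ∀ p : List V, p.Chain' r →
      ∃ q : List V, q.Chain' r ∧ q.Nodup ∧ q.head? = p.head? ∧ q.getLast? = p.getLast? := by
  intro p
  induction p with
  | nil => exact fun _ => ⟨[], List.isChain_nil, by simp⟩
  | cons a l ih =>
    intro hp
    match l with
    | [] => exact ⟨[a], List.isChain_singleton a, by simp⟩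
    | b :: l' =>
      obtain ⟨q, hq, hnd, hh, hl⟩ := ih (List.isChain_cons_cons.mp hp).2
      have hqne : q ≠ [] := by
        intro h; rw [h] at hh; exact (by simp at hh)
      by_cases ha : a ∈ q
      · obtain ⟨s, t, rfl⟩ := List.append_of_mem ha
        refine ⟨a :: t, (List.isChain_split.mp hq).2,
          hnd.sublist (List.suffix_append s (a :: t)).sublist, rfl, ?_⟩
        rw [List.getLast?_cons_cons, ← hl,
          List.getLast?_append_of_ne_nil s (List.cons_ne_nil a t)]
      · refine ⟨a :: q, ?_, hnd.cons ha, rfl, ?_⟩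
        · apply List.isChain_cons.mpr
          refine ⟨?_, hq⟩
          intro y hy
          have hy' : y = b := by
            rw [hh] at hy; simp at hy; exact hy.symm
          exact hy' ▸ (List.isChain_cons_cons.mp hp).1
        · have hcq : a :: q = [a] ++ q := rfl
          rw [List.getLast?_cons_cons, ← hl, hcq,
            List.getLast?_append_of_ne_nil _ hqne]

lemma walk_of_chain :
    ∀ (p : List V) (a b : V), p.Chain' G.Adj → p.head? = some a → p.getLast? = some b →
      ∃ wk : G.Walk a b, wk.support = p := by
  intro p
  induction p with
  | nil => intro a b _ h; simp at h
  | cons x l ih =>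
    intro a b hc hh hl
    have hxa : x = a := by simpa using hh
    subst hxa
    match l with
    | [] =>
      have : x = b := by simpa using hl
      subst this
      exact ⟨Walk.nil, rfl⟩
    | y :: l' =>
      have hadj : G.Adj x y := (List.isChain_cons_cons.mp hc).1
      obtain ⟨wk, hwk⟩ := ih y b (List.isChain_cons_cons.mp hc).2 rfl
        (by rw [← List.getLast?_cons_cons (a := x)]; exact hl)
      exact ⟨Walk.cons hadj wk, by simp [Walk.support_cons, hwk]⟩

lemma walk_edges_eq {a b : V} (wk : G.Walk a b) :
    wk.edges = (wk.support.zip wk.support.tail).map (fun q => s(q.1, q.2)) := by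
  induction wk with
  | nil => simp
  | @cons c d e hadj p ih =>
    simp only [Walk.edges_cons, Walk.support_cons, ih]
    rw [Walk.support_eq_cons p]
    rfl

lemma exists_cross_dart {S : Set V} :
    ∀ {a b : V} (wk : G.Walk a b), a ∈ S → b ∉ S →
      ∃ x y, G.Adj x y ∧ x ∈ S ∧ y ∉ S ∧ s(x, y) ∈ wk.edges := by
  intro a b wk
  induction wk with
  | nil => intro h h'; exact absurd h h'
  | @cons c d e hadj p ih =>
    intro ha hb
    by_cases hv : d ∈ S
    · obtain ⟨x, y, h1, h2, h3, h4⟩ := ih hv hb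
      exact ⟨x, y, h1, h2, h3, by simp [Walk.edges_cons, h4]⟩
    · exact ⟨c, d, hadj, ha, hv, by simp [Walk.edges_cons]⟩

structure IsFlow (G : SimpleGraph V) (u w : V) (f : V → V → ℤ) (k : ℤ) : Prop where
  skew : ∀ x y, f x y = - f y x
  bound : ∀ x y, f x y ≤ 1
  adj : ∀ x y, f x y ≠ 0 → G.Adj x y
  conserve : ∀ x, x ≠ u → x ≠ w → ∑ y, f x y = 0
  value : ∑ y, f u y = k

lemma IsFlow.lb {u w : V} {f k} (hf : IsFlow G u w f k) (x y : V) : -1 ≤ f x y := by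
  have h := hf.bound y x
  rw [hf.skew y x] at h
  omega

lemma cutSum {u w : V} {f k} (hf : IsFlow G u w f k) (S : Finset V)
    (hu : u ∈ S) (hw : w ∉ S) : ∑ x ∈ S, ∑ y ∈ Sᶜ, f x y = k := by
  have h1 : ∑ x ∈ S, ∑ y, f x y = k := by
    rw [Finset.sum_eq_single_of_mem u hu
      (fun x hx hxu => hf.conserve x hxu (fun h => hw (h ▸ hx)))]
    exact hf.value
  have h2 : ∑ x ∈ S, ∑ y, f x y
      = ∑ x ∈ S, ∑ y ∈ S, f x y + ∑ x ∈ S, ∑ y ∈ Sᶜ, f x y := by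
    rw [← Finset.sum_add_distrib]
    exact Finset.sum_congr rfl fun x _ => (Finset.sum_add_sum_compl S _).symm
  have h3 : ∑ x ∈ S, ∑ y ∈ S, f x y = 0 := by
    have hs : ∑ x ∈ S, ∑ y ∈ S, f x y = ∑ x ∈ S, ∑ y ∈ S, f y x := Finset.sum_comm
    have hs2 : ∑ x ∈ S, ∑ y ∈ S, f y x = - ∑ x ∈ S, ∑ y ∈ S, f x y := by
      rw [← Finset.sum_neg_distrib]
      exact Finset.sum_congr rfl fun x _ => by
        rw [← Finset.sum_neg_distrib]
        exact Finset.sum_congr rfl fun y _ => (hf.skew y x)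
    omega
  omega

lemma augment {u w : V} {f : V → V → ℤ} {k : ℤ} (hf : IsFlow G u w f k)
    (huw : u ≠ w) (hk : k ≤ 2)
    (hcut : ∀ F : Finset (Sym2 V), F.card ≤ 2 →
      ∃ wk : G.Walk u w, ∀ e ∈ wk.edges, e ∉ F) :
    ∃ f', IsFlow G u w f' (k + 1) := by
  classical
  set r : V → V → Prop := fun x y => G.Adj x y ∧ f x y ≤ 0 with hr
  have hreach : Relation.ReflTransGen r u w := by
    by_contra hnr
    set S : Finset V := univ.filter (fun x => Relation.ReflTransGen r u x) with hS
    have hu : u ∈ S := by simp only [hS, Finset.mem_filter, Finset.mem_univ, true_and]; exact Relation.ReflTransGen.refl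
    have hw : w ∉ S := by simp [hS]; exact hnr
    have hcross : ∀ x ∈ S, ∀ y ∈ Sᶜ, f x y = if G.Adj x y then 1 else 0 := by
      intro x hx y hy
      rw [Finset.mem_compl] at hy
      by_cases hadj : G.Adj x y
      · rw [if_pos hadj]
        have h1 : ¬ (f x y ≤ 0) := by
          intro h
          apply hy
          simp only [hS, Finset.mem_filter, Finset.mem_univ, true_and] at hx ⊢
          exact hx.tail ⟨hadj, h⟩
        have := hf.bound x y
        omega
      · rw [if_neg hadj]
        by_contra h
        exact hadj (hf.adj x y h)
    have hsum : ∑ x ∈ S, ∑ y ∈ Sᶜ, f x y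
        = ∑ x ∈ S, ∑ y ∈ Sᶜ, (if G.Adj x y then (1:ℤ) else 0) :=
      Finset.sum_congr rfl fun x hx => Finset.sum_congr rfl fun y hy => hcross x hx y hy
    set C : Finset (V × V) := (S ×ˢ Sᶜ).filter (fun q => G.Adj q.1 q.2) with hC
    have hkc : (C.card : ℤ) = k := by
      rw [← cutSum hf S hu hw, hsum, ← Finset.sum_product']
      exact (Finset.sum_boole _ _).symm
    set F : Finset (Sym2 V) := C.image (fun q => s(q.1, q.2)) with hF
    have hFcard : F.card ≤ 2 := by
      have h1 : F.card ≤ C.card := Finset.card_image_le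
      have h2 : C.card ≤ 2 := by omega
      omega
    obtain ⟨wk, hwk⟩ := hcut F hFcard
    obtain ⟨x, y, hadj, hxS, hyS, hmem⟩ :=
      exists_cross_dart (S := (↑S : Set V)) wk (by exact_mod_cast hu)
        (fun h => hw (by exact_mod_cast h))
    refine hwk _ hmem ?_
    rw [hF, Finset.mem_image]
    exact ⟨(x, y), by
      rw [hC, Finset.mem_filter, Finset.mem_product, Finset.mem_compl]
      exact ⟨⟨by exact_mod_cast hxS, fun h => hyS (by exact_mod_cast h)⟩, hadj⟩, rfl⟩
  obtain ⟨l, hchain, hlast⟩ := List.exists_isChain_cons_of_relationReflTransGen hreach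
  have hch' : (u :: l).Chain' r := hchain
  obtain ⟨q, hq, hnd, hh, hl⟩ := exists_nodup_chain r (u :: l) hch'
  have hh' : q.head? = some u := hh
  have hl' : q.getLast? = some w := by
    rw [hl, List.getLast?_eq_getLast (List.cons_ne_nil u l), hlast]
  have hqne : q.Chain' (· ≠ ·) := hq.imp (fun a b hab => (hab.1).ne)
  refine ⟨fun z t => f z t + pathFlow q z t, ?_, ?_, ?_, ?_, ?_⟩
  · intro x y
    rw [hf.skew, pathFlow_skew hqne]; ring
  · intro x y
    have pe := pathFlow_eq hnd x y
    by_cases h1 : (x, y) ∈ arcs q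
    · have := (chain'_of_arcs hq h1).2
      rw [pe, if_pos h1]; omega
    · by_cases h2 : (y, x) ∈ arcs q
      · rw [pe, if_neg h1, if_pos h2]
        have := hf.bound x y
        omega
      · rw [pe, if_neg h1, if_neg h2]
        have := hf.bound x y
        omega
  · intro x y hxy
    have pe := pathFlow_eq hnd x y
    by_cases h1 : (x, y) ∈ arcs q
    · exact (chain'_of_arcs hq h1).1
    · by_cases h2 : (y, x) ∈ arcs q
      · exact ((chain'_of_arcs hq h2).1).symm
      · rw [pe, if_neg h1, if_neg h2, add_zero] at hxy
        exact hf.adj x y hxy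
  · intro x hxu hxw
    rw [Finset.sum_add_distrib, hf.conserve x hxu hxw, pathFlow_rowSum hqne, hh', hl']
    simp [Ne.symm hxu, Ne.symm hxw, (fun h : u = x => hxu h.symm), (fun h : w = x => hxw h.symm)]
  · rw [Finset.sum_add_distrib, hf.value, pathFlow_rowSum hqne, hh', hl']
    simp [huw, Ne.symm huw]


lemma decompose {u w : V} {f : V → V → ℤ} {k : ℤ} (hf : IsFlow G u w f k)
    (hk : 1 ≤ k) (huw : u ≠ w) :
    ∃ (wk : G.Walk u w) (f' : V → V → ℤ), wk.IsPath ∧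
      (∀ e ∈ wk.edges, ∃ z t, e = s(z, t) ∧ f z t = 1) ∧
      IsFlow G u w f' (k - 1) ∧
      (∀ z t, f' z t = 1 → f z t = 1 ∧ s(z, t) ∉ wk.edges) := by
  classical
  set r : V → V → Prop := fun x y => f x y = 1 with hr
  have hreach : Relation.ReflTransGen r u w := by
    by_contra hnr
    set S : Finset V := univ.filter (fun x => Relation.ReflTransGen r u x) with hS
    have hu : u ∈ S := by
      simp only [hS, Finset.mem_filter, Finset.mem_univ, true_and]
      exact Relation.ReflTransGen.refl
    have hw : w ∉ S := by simp [hS]; exact hnr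
    have hcross : ∀ x ∈ S, ∀ y ∈ Sᶜ, f x y ≤ 0 := by
      intro x hx y hy
      rw [Finset.mem_compl] at hy
      have h1 : f x y ≠ 1 := by
        intro h
        apply hy
        simp only [hS, Finset.mem_filter, Finset.mem_univ, true_and] at hx ⊢
        exact hx.tail h
      have := hf.bound x y
      omega
    have := cutSum hf S hu hw
    have hle : ∑ x ∈ S, ∑ y ∈ Sᶜ, f x y ≤ 0 :=
      Finset.sum_nonpos fun x hx => Finset.sum_nonpos fun y hy => hcross x hx y hy
    omega
  obtain ⟨l, hchain, hlast⟩ := List.exists_isChain_cons_of_relationReflTransGen hreach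
  have hch' : (u :: l).Chain' r := hchain
  obtain ⟨q, hq, hnd, hh, hl⟩ := exists_nodup_chain r (u :: l) hch'
  have hh' : q.head? = some u := hh
  have hl' : q.getLast? = some w := by
    rw [hl, List.getLast?_eq_getLast (List.cons_ne_nil u l), hlast]
  have hadjq : q.Chain' G.Adj := hq.imp (fun a b hab => hf.adj a b (by rw [hab]; omega))
  have hqne : q.Chain' (· ≠ ·) := hadjq.imp (fun a b hab => hab.ne)
  obtain ⟨wk, hwk⟩ := walk_of_chain q u w hadjq hh' hl'
  have hedges : ∀ e ∈ wk.edges, ∃ z t, e = s(z, t) ∧ (z, t) ∈ arcs q := by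
    intro e he
    rw [walk_edges_eq wk, List.mem_map] at he
    obtain ⟨⟨z, t⟩, hzt, rfl⟩ := he
    exact ⟨z, t, rfl, by rw [← hwk]; exact hzt⟩
  have harcne : ∀ z t : V, s(z, t) ∉ wk.edges ↔ ((z, t) ∉ arcs q ∧ (t, z) ∉ arcs q) := by
    intro z t
    constructor
    · intro hne
      constructor <;> intro hmem <;> apply hne <;>
        rw [walk_edges_eq wk, List.mem_map]
      · exact ⟨(z, t), by rw [hwk]; exact hmem, rfl⟩
      · exact ⟨(t, z), by rw [hwk]; exact hmem, Sym2.eq_swap⟩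
    · rintro ⟨h1, h2⟩ hmem
      obtain ⟨a, b, hab, habmem⟩ := hedges _ hmem
      rw [Sym2.eq_iff] at hab
      rcases hab with ⟨rfl, rfl⟩ | ⟨rfl, rfl⟩
      · exact h1 habmem
      · exact h2 habmem
  -- case analysis on the new flow values
  have hcase : ∀ z t : V, (f z t - pathFlow q z t = 0 ∧ (((z,t) ∈ arcs q) ∨ ((t,z) ∈ arcs q)))
      ∨ (f z t - pathFlow q z t = f z t ∧ (z, t) ∉ arcs q ∧ (t, z) ∉ arcs q) := by
    intro z t
    have pe := pathFlow_eq hnd z t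
    by_cases h1 : (z, t) ∈ arcs q
    · left
      refine ⟨?_, Or.inl h1⟩
      have := chain'_of_arcs hq h1
      rw [pe, if_pos h1]
      rw [hr] at this
      omega
    · by_cases h2 : (t, z) ∈ arcs q
      · left
        refine ⟨?_, Or.inr h2⟩
        have h3 : f t z = 1 := chain'_of_arcs hq h2
        have h4 := hf.skew z t
        rw [pe, if_neg h1, if_pos h2]
        omega
      · right
        rw [pe, if_neg h1, if_neg h2]
        exact ⟨by ring, h1, h2⟩
  refine ⟨wk, fun z t => f z t - pathFlow q z t, ?_, ?_, ⟨?_, ?_, ?_, ?_, ?_⟩, ?_⟩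
  · exact Walk.IsPath.mk' (by rw [hwk]; exact hnd)
  · intro e he
    obtain ⟨z, t, rfl, hmem⟩ := hedges e he
    exact ⟨z, t, rfl, chain'_of_arcs hq hmem⟩
  · intro x y
    rw [hf.skew, pathFlow_skew hqne]; ring
  · intro x y
    rcases hcase x y with ⟨h, _⟩ | ⟨h, _⟩ <;> rw [h]
    · omega
    · exact hf.bound x y
  · intro x y hxy
    rcases hcase x y with ⟨h, _⟩ | ⟨h, _⟩
    · rw [h] at hxy; omega
    · rw [h] at hxy; exact hf.adj x y hxy
  · intro x hxu hxw
    rw [Finset.sum_sub_distrib, hf.conserve x hxu hxw, pathFlow_rowSum hqne, hh', hl']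
    have h1 : ¬ (u = x) := fun h => hxu h.symm
    have h2 : ¬ (w = x) := fun h => hxw h.symm
    simp [h1, h2]
  · rw [Finset.sum_sub_distrib, hf.value, pathFlow_rowSum hqne, hh', hl']
    simp [huw, Ne.symm huw]
  · intro z t hzt
    change f z t - pathFlow q z t = 1 at hzt
    rcases hcase z t with ⟨h, _⟩ | ⟨h, hn1, hn2⟩
    · rw [h] at hzt; omega
    · rw [h] at hzt
      exact ⟨hzt, (harcne z t).mpr ⟨hn1, hn2⟩⟩


lemma avoid {a b : V} (p q r : G.Walk a b)
    (hpq : p.edges.Disjoint q.edges) (hpr : p.edges.Disjoint r.edges)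
    (hqr : q.edges.Disjoint r.edges) (F : Finset (Sym2 V)) (hF : F.card ≤ 2) :
    ∃ wk : G.Walk a b, ∀ e ∈ wk.edges, e ∉ F := by
  by_cases h1 : ∀ e ∈ p.edges, e ∉ F
  · exact ⟨p, h1⟩
  by_cases h2 : ∀ e ∈ q.edges, e ∉ F
  · exact ⟨q, h2⟩
  by_cases h3 : ∀ e ∈ r.edges, e ∉ F
  · exact ⟨r, h3⟩
  exfalso
  push_neg at h1 h2 h3
  obtain ⟨e1, he1, hf1⟩ := h1
  obtain ⟨e2, he2, hf2⟩ := h2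
  obtain ⟨e3, he3, hf3⟩ := h3
  have hne12 : e1 ≠ e2 := fun h => hpq he1 (h ▸ he2)
  have hne13 : e1 ≠ e3 := fun h => hpr he1 (h ▸ he3)
  have hne23 : e2 ≠ e3 := fun h => hqr he2 (h ▸ he3)
  have hsub : ({e1, e2, e3} : Finset (Sym2 V)) ⊆ F := by
    intro x hx
    simp only [Finset.mem_insert, Finset.mem_singleton] at hx
    rcases hx with rfl | rfl | rfl <;> assumption
  have hcard : ({e1, e2, e3} : Finset (Sym2 V)).card = 3 := by
    rw [Finset.card_insert_of_notMem (by simp [hne12, hne13]),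
      Finset.card_insert_of_notMem (by simp [hne23]), Finset.card_singleton]
  have := Finset.card_le_card hsub
  omega

lemma zeroFlow (u w : V) : IsFlow G u w (fun _ _ => 0) 0 := by
  refine ⟨fun x y => by ring, fun x y => by norm_num, fun x y h => absurd rfl h,
    fun x _ _ => by simp, by simp⟩

end TEDP

open TEDP in
/-- For any finite simple graph `G`, the relation `E₃` on the vertices, where `u E₃ v` iff
there exist three pairwise edge-disjoint paths from `u` to `v`, is an equivalence relation. -/
theorem three_edge_disjoint_paths_equivalence {V : Type*} [Fintype V] (G : SimpleGraph V) :
    Equivalence (fun u v : V => ∃ p q r : G.Walk u v,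
      p.IsPath ∧ q.IsPath ∧ r.IsPath ∧
      p.edges.Disjoint q.edges ∧ p.edges.Disjoint r.edges ∧ q.edges.Disjoint r.edges) := by
  classical
  have hrefl : ∀ x : V, ∃ p q r : G.Walk x x,
      p.IsPath ∧ q.IsPath ∧ r.IsPath ∧
      p.edges.Disjoint q.edges ∧ p.edges.Disjoint r.edges ∧ q.edges.Disjoint r.edges := by
    intro x
    refine ⟨Walk.nil, Walk.nil, Walk.nil, Walk.IsPath.nil, Walk.IsPath.nil, Walk.IsPath.nil,
      ?_, ?_, ?_⟩ <;>
    · intro e he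
      simp [Walk.edges_nil] at he
  constructor
  · exact hrefl
  · rintro u v ⟨p, q, r, hp, hq, hr, hpq, hpr, hqr⟩
    refine ⟨p.reverse, q.reverse, r.reverse, hp.reverse, hq.reverse, hr.reverse, ?_, ?_, ?_⟩ <;>
      rw [Walk.edges_reverse, Walk.edges_reverse]
    · exact fun e he he' => hpq (List.mem_reverse.mp he) (List.mem_reverse.mp he')
    · exact fun e he he' => hpr (List.mem_reverse.mp he) (List.mem_reverse.mp he')
    · exact fun e he he' => hqr (List.mem_reverse.mp he) (List.mem_reverse.mp he')
  · rintro u v w ⟨p1, p2, p3, hp1, hp2, hp3, h12, h13, h23⟩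
      ⟨q1, q2, q3, hq1, hq2, hq3, g12, g13, g23⟩
    by_cases huw : u = w
    · subst huw; exact hrefl u
    have hcut : ∀ F : Finset (Sym2 V), F.card ≤ 2 →
        ∃ wk : G.Walk u w, ∀ e ∈ wk.edges, e ∉ F := by
      intro F hF
      obtain ⟨P, hP⟩ := avoid p1 p2 p3 h12 h13 h23 F hF
      obtain ⟨Q, hQ⟩ := avoid q1 q2 q3 g12 g13 g23 F hF
      refine ⟨P.append Q, ?_⟩
      intro e he
      rw [Walk.edges_append, List.mem_append] at he
      rcases he with he | he
      · exact hP e he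
      · exact hQ e he
    obtain ⟨fA, hfA⟩ := augment (zeroFlow u w) huw (by norm_num) hcut
    obtain ⟨fB, hfB⟩ := augment hfA huw (by norm_num) hcut
    obtain ⟨fC, hfC⟩ := augment hfB huw (by norm_num) hcut
    obtain ⟨w1, f2, hw1, hw1e, hf2, hd1⟩ := decompose hfC (by norm_num) huw
    obtain ⟨w2, f1, hw2, hw2e, hf1, hd2⟩ := decompose hf2 (by norm_num) huw
    obtain ⟨w3, f0, hw3, hw3e, hf0, hd3⟩ := decompose hf1 (by norm_num) huw
    have d21 : w2.edges.Disjoint w1.edges := by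
      intro e he
      obtain ⟨z, t, rfl, hzt⟩ := hw2e e he
      exact (hd1 z t hzt).2
    have d31 : w3.edges.Disjoint w1.edges := by
      intro e he
      obtain ⟨z, t, rfl, hzt⟩ := hw3e e he
      exact (hd1 z t (hd2 z t hzt).1).2
    have d32 : w3.edges.Disjoint w2.edges := by
      intro e he
      obtain ⟨z, t, rfl, hzt⟩ := hw3e e he
      exact (hd2 z t hzt).2
    exact ⟨w1, w2, w3, hw1, hw2, hw3,
      fun e he he' => d21 he' he, fun e he he' => d31 he' he, fun e he he' => d32 he' he⟩
end
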